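/- arXiv:1102.4421 — 4 statements merged into one kernel-verified Lean document; each statement's English description precedes it below -/
import Mathlib

section
/- Let Δ be a finite connected graph and G ≤ Aut(Δ). Let (x,y) be an arc of Δ. Suppose N ≤ G_x acts transitively on Δ(x) and M ≤ G_y acts transitively on Δ(y). If H ≤ G_{x,y} (the stabiliser of both x and y) and H is normal in ⟨N, M⟩, then H = 1. -/
open Equiv Subgroup

/-- `N` (a subgroup of `Perm V`) acts transitively on the neighbourhood of `x`. -/
def transOn {V : Type*} (Δ : SimpleGraph V) (N : Subgroup (Equiv.Perm V)) (x : V) : Prop :=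
  ∀ u ∈ Δ.neighborSet x, ∀ v ∈ Δ.neighborSet x, ∃ g ∈ N, g u = v

/-- The permutation group induced by `N` on the neighbourhood of `x` is semiregular. -/
def semiregOn {V : Type*} (Δ : SimpleGraph V) (N : Subgroup (Equiv.Perm V)) (x : V) : Prop :=
  ∀ g ∈ N, (∃ u ∈ Δ.neighborSet x, g u = u) → ∀ v ∈ Δ.neighborSet x, g v = v

/-- The stabiliser `G_x`. -/
def vstab {V : Type*} (G : Subgroup (Equiv.Perm V)) (x : V) : Subgroup (Equiv.Perm V) :=
  G ⊓ MulAction.stabilizer (Equiv.Perm V) x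

/-- `G_x^{[i]}`: pointwise stabiliser of the ball of radius `i` around `x`. -/
def ball {V : Type*} (Δ : SimpleGraph V) (G : Subgroup (Equiv.Perm V)) (x : V) (i : ℕ) :
    Subgroup (Equiv.Perm V) :=
  G ⊓ ⨅ z ∈ {z : V | Δ.dist x z ≤ i}, MulAction.stabilizer (Equiv.Perm V) z

/-- `K` is a normal subgroup of `H` (both subgroups of `Perm V`). -/
def normalIn {V : Type*} (K H : Subgroup (Equiv.Perm V)) : Prop :=
  K ≤ H ∧ ∀ h ∈ H, ∀ k ∈ K, h * k * h⁻¹ ∈ K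

/-- `O_p(H)`: the largest normal `p`-subgroup of `H`. -/
def Op {V : Type*} (p : ℕ) (H : Subgroup (Equiv.Perm V)) : Subgroup (Equiv.Perm V) :=
  sSup {K | normalIn K H ∧ IsPGroup p K}

/-- `E_x = ⟨O_p(G_{x,z}) : z ∈ Δ(x)⟩`. -/
def Ep {V : Type*} (Δ : SimpleGraph V) (G : Subgroup (Equiv.Perm V)) (p : ℕ) (x : V) :
    Subgroup (Equiv.Perm V) :=
  ⨆ z ∈ Δ.neighborSet x, Op p (vstab G x ⊓ vstab G z)

/-- `C_{G_x}(G_x^{[1]})`. -/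
def locCent {V : Type*} (Δ : SimpleGraph V) (G : Subgroup (Equiv.Perm V)) (x : V) :
    Subgroup (Equiv.Perm V) :=
  vstab G x ⊓ Subgroup.centralizer ((ball Δ G x 1 : Subgroup (Equiv.Perm V)) : Set (Equiv.Perm V))

/-- Hypothesis (⋆). -/
def StarHyp {V : Type*} (Δ : SimpleGraph V) (G : Subgroup (Equiv.Perm V)) : Prop :=
  ∀ x : V,
    transOn Δ (vstab G x) x ∧
    (transOn Δ (locCent Δ G x) x ∨ semiregOn Δ (locCent Δ G x) x) ∧
    ∀ p : ℕ, p.Prime → (transOn Δ (Ep Δ G p x) x ∨ semiregOn Δ (Ep Δ G p x) x)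

/-- `G` is a group of automorphisms of `Δ`. -/
def isAut {V : Type*} (Δ : SimpleGraph V) (G : Subgroup (Equiv.Perm V)) : Prop :=
  ∀ g ∈ G, ∀ u v : V, Δ.Adj (g u) (g v) ↔ Δ.Adj u v

/-- `K` is a subnormal subgroup of `H`. -/
def subnormalIn {V : Type*} (K H : Subgroup (Equiv.Perm V)) : Prop :=
  ∃ (n : ℕ) (c : ℕ → Subgroup (Equiv.Perm V)),
    c 0 = K ∧ c n = H ∧ ∀ i < n, normalIn (c i) (c (i + 1))

/-- `K` is quasisimple: perfect and simple modulo its centre. -/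
def IsQuasisimple {V : Type*} (K : Subgroup (Equiv.Perm V)) : Prop :=
  commutator ↥K = ⊤ ∧ IsSimpleGroup (↥K ⧸ Subgroup.center ↥K)

/-- `E(H)`: the layer, generated by the components of `H`. -/
def layer {V : Type*} (H : Subgroup (Equiv.Perm V)) : Subgroup (Equiv.Perm V) :=
  sSup {K | subnormalIn K H ∧ IsQuasisimple K}

/-- `F(H)`: the Fitting subgroup of `H`. -/
def fitting {V : Type*} (H : Subgroup (Equiv.Perm V)) : Subgroup (Equiv.Perm V) :=
  sSup {K | normalIn K H ∧ Group.IsNilpotent ↥K}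

/-- `F*(H) = E(H)F(H)`: the generalised Fitting subgroup of `H`. -/
def genFitting {V : Type*} (H : Subgroup (Equiv.Perm V)) : Subgroup (Equiv.Perm V) :=
  layer H ⊔ fitting H

theorem stmt0 {V : Type*} [Fintype V] (Δ : SimpleGraph V) (G : Subgroup (Equiv.Perm V))
    (hconn : Δ.Connected) (hG : isAut Δ G) {x y : V} (hxy : Δ.Adj x y)
    (N M H : Subgroup (Equiv.Perm V))
    (hNG : N ≤ vstab G x) (hN : transOn Δ N x)
    (hMG : M ≤ vstab G y) (hM : transOn Δ M y)
    (hH : H ≤ vstab G x ⊓ vstab G y) (hHn : normalIn H (N ⊔ M)) :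
    H = ⊥ := by
  set W : Subgroup (Equiv.Perm V) := N ⊔ M with hW
  have hWG : W ≤ G := sup_le (hNG.trans inf_le_left) (hMG.trans inf_le_left)
  -- every vertex is of the form g x or g y for some g ∈ W
  have key : ∀ v : V, ∃ g ∈ W, v = g x ∨ v = g y := by
    have step : ∀ u v : V, (∃ g ∈ W, u = g x ∨ u = g y) → Δ.Adj u v →
        ∃ g ∈ W, v = g x ∨ v = g y := by
      rintro u v ⟨g, hg, hu | hu⟩ hadj
      · have h1 : Δ.Adj x (g⁻¹ v) := by
          have := (hG g (hWG hg) x (g⁻¹ v)).mp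
          simp only [Equiv.Perm.coe_inv, Equiv.apply_symm_apply] at this
          exact this (hu ▸ hadj)
        obtain ⟨n, hn, hny⟩ := hN y hxy (g⁻¹ v) h1
        refine ⟨g * n, mul_mem hg (le_sup_left (b := M) hn), Or.inr ?_⟩
        have : g (n y) = g (g⁻¹ v) := congrArg g hny
        simpa [Equiv.Perm.mul_apply] using this.symm
      · have h1 : Δ.Adj y (g⁻¹ v) := by
          have := (hG g (hWG hg) y (g⁻¹ v)).mp
          simp only [Equiv.Perm.coe_inv, Equiv.apply_symm_apply] at this
          exact this (hu ▸ hadj)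
        obtain ⟨m, hm, hmx⟩ := hM x hxy.symm (g⁻¹ v) h1
        refine ⟨g * m, mul_mem hg (le_sup_right (a := N) hm), Or.inl ?_⟩
        have : g (m x) = g (g⁻¹ v) := congrArg g hmx
        simpa [Equiv.Perm.mul_apply] using this.symm
    have prop : ∀ u v : V, Δ.Walk u v → (∃ g ∈ W, u = g x ∨ u = g y) →
        ∃ g ∈ W, v = g x ∨ v = g y := by
      intro u v w
      induction w with
      | nil => exact id
      | cons h p ih => exact fun hu => ih (step _ _ hu h)
    intro v
    obtain ⟨w⟩ := hconn.preconnected x v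
    exact prop x v w ⟨1, one_mem W, Or.inl rfl⟩
  -- elements of H fix x and y
  have hHx : ∀ h ∈ H, h x = x := fun h hh => (hH hh).1.2
  have hHy : ∀ h ∈ H, h y = y := fun h hh => (hH hh).2.2
  -- conclude
  rw [eq_bot_iff]
  intro h hh
  have : ∀ v : V, h v = v := by
    intro v
    obtain ⟨g, hg, hv | hv⟩ := key v
    · have hconj : g⁻¹ * h * g ∈ H := by
        have := hHn.2 g⁻¹ (inv_mem hg) h hh
        simpa using this
      have := hHx _ hconj
      have := congrArg g this
      simpa [Equiv.Perm.mul_apply, hv] using this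
    · have hconj : g⁻¹ * h * g ∈ H := by
        have := hHn.2 g⁻¹ (inv_mem hg) h hh
        simpa using this
      have := hHy _ hconj
      have := congrArg g this
      simpa [Equiv.Perm.mul_apply, hv] using this
  have : h = 1 := Equiv.ext this
  simp [this, Subgroup.mem_bot]
end

section
/- Let Δ be a finite connected graph with G ≤ Aut(Δ) satisfying Hypothesis (⋆) at every vertex. Let (x,y) be an arc. If E(G_x^{[1]}) ≠ E(G_{x,y}), then G_{x,y}^{[1]} = G_x^{[2]} and G_y^{[2]} = 1. -/
open Equiv Subgroup

section GT
variable {V : Type*}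

open Subgroup Equiv
open scoped Pointwise

lemma subnormal_le {K H : Subgroup (Equiv.Perm V)} (h : subnormalIn K H) : K ≤ H := by
  obtain ⟨n, c, h0, hn, hc⟩ := h
  subst h0; subst hn
  have : ∀ m ≤ n, c 0 ≤ c m := by
    intro m hm
    induction m with
    | zero => exact le_rfl
    | succ k ih =>
      exact (ih (Nat.le_of_succ_le hm)).trans (hc k (Nat.lt_of_lt_of_le (Nat.lt_succ_self k) hm)).1
  exact this n le_rfl

lemma quasi_perfect {K : Subgroup (Equiv.Perm V)} (h : IsQuasisimple K) : ⁅K, K⁆ = K := by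
  have h2 := Subgroup.map_commutator (⊤ : Subgroup ↥K) ⊤ K.subtype
  have h3 : Subgroup.map K.subtype ⊤ = K := by
    rw [← MonoidHom.range_eq_map, Subgroup.range_subtype]
  rw [h3] at h2
  have h4 : Subgroup.map K.subtype (_root_.commutator ↥K) = K := by
    rw [h.1, h3]
  unfold _root_.commutator at h4
  rw [h2] at h4
  exact h4

open scoped commutatorElement in
lemma comm_central_left {G : Type*} [Group G] (z g h : G) (hz : ∀ w, w * z = z * w) :
    ⁅g * z, h⁆ = ⁅g, h⁆ := by
  have h1 : z * h = h * z := (hz h).symm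
  simp only [commutatorElement_def, mul_inv_rev]
  rw [mul_assoc g z h, h1, ← mul_assoc g h z]
  group

open scoped commutatorElement in
lemma comm_central_right {G : Type*} [Group G] (z g h : G) (hz : ∀ w, w * z = z * w) :
    ⁅g, h * z⁆ = ⁅g, h⁆ := by
  have h1 : z * g⁻¹ = g⁻¹ * z := (hz g⁻¹).symm
  simp only [commutatorElement_def, mul_inv_rev]
  rw [← mul_assoc g h z, mul_assoc (g * h) z g⁻¹, h1, ← mul_assoc (g * h) g⁻¹ z]
  group

open scoped commutatorElement in
lemma wielandt_base {K N : Subgroup (Equiv.Perm V)} (hq : IsQuasisimple K)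
    (hN : normalIn N K) (hKN : ¬ K ≤ N) :
    ∀ n ∈ N, ∀ k ∈ K, Commute n k := by
  classical
  set N' : Subgroup ↥K := N.subgroupOf K with hN'
  have hN'norm : N'.Normal := by
    constructor
    intro n hn g
    rw [Subgroup.mem_subgroupOf] at hn ⊢
    exact hN.2 g.1 g.2 n.1 hn
  haveI := hq.2
  set Z := Subgroup.center ↥K with hZ
  set φ := QuotientGroup.mk' Z with hφ
  have hmapnorm : (N'.map φ).Normal := hN'norm.map φ (QuotientGroup.mk'_surjective Z)
  rcases hmapnorm.eq_bot_or_eq_top with hbot | htop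
  · have hsub : N' ≤ Z := by
      have := (Subgroup.map_eq_bot_iff N').mp hbot
      rwa [QuotientGroup.ker_mk'] at this
    intro n hn k hk
    have hnK : n ∈ K := hN.1 hn
    have hmem : (⟨n, hnK⟩ : ↥K) ∈ N' := by rw [Subgroup.mem_subgroupOf]; exact hn
    have hcen := Subgroup.mem_center_iff.mp (hsub hmem) ⟨k, hk⟩
    have := congrArg Subtype.val hcen
    exact (this).symm
  · exfalso
    apply hKN
    have hsup : N' ⊔ Z = ⊤ := by
      have h1 : Subgroup.comap φ (N'.map φ) = ⊤ := by rw [htop]; exact Subgroup.comap_top φ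
      rw [Subgroup.comap_map_eq, QuotientGroup.ker_mk'] at h1
      exact h1
    have hperf : _root_.commutator ↥K = ⊤ := hq.1
    have hcomm : (⊤ : Subgroup ↥K) ≤ N' := by
      rw [← hperf]
      unfold _root_.commutator
      rw [← hsup]
      rw [Subgroup.commutator_le]
      intro g₁ hg₁ g₂ hg₂
      have hset := Subgroup.mul_normal N' Z
      have hg₁' : g₁ ∈ (N' : Set ↥K) * (Z : Set ↥K) := by rw [← hset]; exact_mod_cast hg₁
      have hg₂' : g₂ ∈ (N' : Set ↥K) * (Z : Set ↥K) := by rw [← hset]; exact_mod_cast hg₂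
      obtain ⟨n₁, hn₁, z₁, hz₁, rfl⟩ := hg₁'
      obtain ⟨n₂, hn₂, z₂, hz₂, rfl⟩ := hg₂'
      have e1 : ⁅n₁ * z₁, n₂ * z₂⁆ = ⁅n₁, n₂⁆ := by
        rw [comm_central_left z₁ n₁ (n₂ * z₂) (fun w => Subgroup.mem_center_iff.mp hz₁ w),
            comm_central_right z₂ n₁ n₂ (fun w => Subgroup.mem_center_iff.mp hz₂ w)]
      rw [e1, commutatorElement_def]
      exact N'.mul_mem (N'.mul_mem (N'.mul_mem hn₁ hn₂) (N'.inv_mem hn₁)) (N'.inv_mem hn₂)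
    intro k hk
    have hmem : (⟨k, hk⟩ : ↥K) ∈ N' := hcomm (Subgroup.mem_top _)
    rwa [Subgroup.mem_subgroupOf] at hmem

end GT

section GT2
variable {V : Type*}
open Subgroup Equiv

lemma wielandt_aux : ∀ (n : ℕ) (K H N : Subgroup (Equiv.Perm V)) (c : ℕ → Subgroup (Equiv.Perm V)),
    c 0 = K → c n = H → (∀ i < n, normalIn (c i) (c (i+1))) →
    IsQuasisimple K → normalIn N H → ¬ K ≤ N →
    ∀ a ∈ N, ∀ k ∈ K, Commute a k := by
  intro n
  induction n with
  | zero =>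
    intro K H N c h0 hn hc hq hN hKN
    have hHK : H = K := by rw [← h0, hn]
    subst hHK
    exact wielandt_base hq hN hKN
  | succ n ih =>
    intro K H N c h0 hn hc hq hN hKN
    set M := c n with hM
    have hMH : normalIn M H := by rw [← hn]; exact hc n (Nat.lt_succ_self n)
    have hKM : K ≤ M := by
      refine subnormal_le ⟨n, c, h0, rfl, ?_⟩
      intro i hi; exact hc i (Nat.lt_succ_of_lt hi)
    have hKH : K ≤ H := hKM.trans hMH.1
    have hN' : normalIn (N ⊓ M) M := by
      constructor
      · exact inf_le_right
      · intro h hh k hk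
        refine ⟨hN.2 h (hMH.1 hh) k hk.1, M.mul_mem (M.mul_mem hh hk.2) (M.inv_mem hh)⟩
    have hKN' : ¬ K ≤ N ⊓ M := fun hle => hKN (hle.trans inf_le_left)
    have IH := ih K M (N ⊓ M) c h0 rfl (fun i hi => hc i (Nat.lt_succ_of_lt hi)) hq hN' hKN'
    have hKNle : ⁅K, N⁆ ≤ M ⊓ N := by
      rw [Subgroup.commutator_le]
      intro k hk a ha
      constructor
      · have h1 : a * k⁻¹ * a⁻¹ ∈ M := hMH.2 a (hN.1 ha) k⁻¹ (M.inv_mem (hKM hk))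
        have : k * (a * k⁻¹ * a⁻¹) ∈ M := M.mul_mem (hKM hk) h1
        rwa [commutatorElement_def, show k * a * k⁻¹ * a⁻¹ = k * (a * k⁻¹ * a⁻¹) by group]
      · have h1 : k * a * k⁻¹ ∈ N := hN.2 k (hKH hk) a ha
        have : (k * a * k⁻¹) * a⁻¹ ∈ N := N.mul_mem h1 (N.inv_mem ha)
        rwa [commutatorElement_def]
    have hcentral : M ⊓ N ≤ Subgroup.centralizer (K : Set (Equiv.Perm V)) := by
      intro a ha
      rw [Subgroup.mem_centralizer_iff]
      intro k hk
      exact (IH a ⟨ha.2, ha.1⟩ k hk).eq.symm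
    have h1 : ⁅⁅K, N⁆, K⁆ = ⊥ := by
      rw [Subgroup.commutator_eq_bot_iff_le_centralizer]
      exact hKNle.trans hcentral
    have h2 : ⁅⁅N, K⁆, K⁆ = ⊥ := by rwa [Subgroup.commutator_comm N K]
    have h3 : ⁅⁅K, K⁆, N⁆ = ⊥ := Subgroup.commutator_commutator_eq_bot_of_rotate h1 h2
    rw [quasi_perfect hq] at h3
    have h4 : K ≤ Subgroup.centralizer (N : Set (Equiv.Perm V)) :=
      Subgroup.commutator_eq_bot_iff_le_centralizer.mp h3
    intro a ha k hk
    exact ((Subgroup.mem_centralizer_iff.mp (h4 hk)) a ha)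

lemma wielandt {K H N : Subgroup (Equiv.Perm V)} (hK : subnormalIn K H)
    (hq : IsQuasisimple K) (hN : normalIn N H) (hKN : ¬ K ≤ N) :
    ∀ a ∈ N, ∀ k ∈ K, Commute a k := by
  obtain ⟨n, c, h0, hn, hc⟩ := hK
  exact wielandt_aux n K H N c h0 hn hc hq hN hKN

lemma subnormal_of_le {K H N : Subgroup (Equiv.Perm V)} (hK : subnormalIn K H)
    (hKN : K ≤ N) (hN : normalIn N H) : subnormalIn K N := by
  obtain ⟨n, c, h0, hn, hc⟩ := hK
  refine ⟨n, fun i => c i ⊓ N, by show c 0 ⊓ N = K; rw [h0]; exact inf_eq_left.mpr hKN,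
    by show c n ⊓ N = N; rw [hn]; exact inf_eq_right.mpr hN.1, ?_⟩
  intro i hi
  constructor
  · exact inf_le_inf_right N (hc i hi).1
  · intro h hh k hk
    exact ⟨(hc i hi).2 h hh.1 k hk.1, N.mul_mem (N.mul_mem hh.2 hk.2) (N.inv_mem hh.2)⟩

lemma subnormal_extend {K H H' : Subgroup (Equiv.Perm V)} (hK : subnormalIn K H)
    (hH : normalIn H H') : subnormalIn K H' := by
  obtain ⟨n, c, h0, hn, hc⟩ := hK
  refine ⟨n + 1, fun i => if i ≤ n then c i else H', by simpa using h0, by simp, ?_⟩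
  intro i hi
  rcases Nat.lt_or_ge i n with h | h
  · simpa [Nat.le_of_lt h, Nat.succ_le_of_lt h] using hc i h
  · have : i = n := Nat.le_antisymm (Nat.lt_succ_iff.mp hi) h
    subst this
    simpa [Nat.lt_irrefl, hn] using hH

lemma layer_mono {A B : Subgroup (Equiv.Perm V)} (h : normalIn A B) : layer A ≤ layer B := by
  apply sSup_le
  intro K hK
  exact le_sSup ⟨subnormal_extend hK.1 h, hK.2⟩

lemma exists_component {A B : Subgroup (Equiv.Perm V)} (hAB : normalIn A B)
    (hne : layer A ≠ layer B) :
    ∃ K : Subgroup (Equiv.Perm V), subnormalIn K B ∧ IsQuasisimple K ∧ ¬ K ≤ A := by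
  by_contra hcon
  push_neg at hcon
  apply hne
  refine le_antisymm (layer_mono hAB) ?_
  apply sSup_le
  intro K hK
  have hKA : K ≤ A := hcon K hK.1 hK.2
  have : subnormalIn K A := subnormal_of_le hK.1 hKA hAB
  exact le_sSup (show K ∈ {K | subnormalIn K A ∧ IsQuasisimple K} from ⟨this, hK.2⟩)

end GT2

section GR
open Subgroup Equiv SimpleGraph

variable {V : Type*} {Δ : SimpleGraph V} {G : Subgroup (Equiv.Perm V)}

lemma dist_le_one_of_adj (h : Δ.Adj v t) : Δ.dist v t ≤ 1 := by
  have := SimpleGraph.dist_le h.toWalk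
  simpa using this

lemma dist_le_two_of_adj_adj {m : V} (h1 : Δ.Adj v m) (h2 : Δ.Adj m t) : Δ.dist v t ≤ 2 := by
  have := SimpleGraph.dist_le (SimpleGraph.Walk.cons h1 h2.toWalk)
  simpa using this

lemma dchar1 (hconn : Δ.Connected) (v t : V) :
    Δ.dist v t ≤ 1 ↔ t = v ∨ Δ.Adj v t := by
  constructor
  · intro h
    by_cases hvt : t = v
    · exact Or.inl hvt
    · obtain ⟨p, hp⟩ := (hconn v t).exists_walk_length_eq_dist
      right
      cases p with
      | nil => exact absurd rfl (Ne.symm hvt)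
      | cons hadj q =>
        have hq : q.length = 0 := by
          have := hp ▸ h
          simp [SimpleGraph.Walk.length_cons] at this
          exact SimpleGraph.Walk.nil_iff_length_eq.mp this
        have h9 := SimpleGraph.Walk.eq_of_length_eq_zero hq
        subst h9
        exact hadj
  · rintro (rfl | h)
    · simp [SimpleGraph.dist_self]
    · exact dist_le_one_of_adj h

lemma dchar2 (hconn : Δ.Connected) (v t : V) :
    Δ.dist v t ≤ 2 ↔ t = v ∨ Δ.Adj v t ∨ ∃ m, Δ.Adj v m ∧ Δ.Adj m t := by
  constructor
  · intro h
    by_cases hvt : t = v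
    · exact Or.inl hvt
    · obtain ⟨p, hp⟩ := (hconn v t).exists_walk_length_eq_dist
      right
      cases p with
      | nil => exact absurd rfl (Ne.symm hvt)
      | cons hadj q =>
        rename_i a
        cases q with
        | nil => exact Or.inl hadj
        | cons hadj2 q2 =>
          have hq2 : q2.length = 0 := by
            have := hp ▸ h
            simp [SimpleGraph.Walk.length_cons] at this
            exact SimpleGraph.Walk.nil_iff_length_eq.mp this
          have := SimpleGraph.Walk.eq_of_length_eq_zero hq2
          right
          subst this
          exact ⟨a, hadj, hadj2⟩
  · rintro (rfl | h | ⟨m, h1, h2⟩)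
    · simp [SimpleGraph.dist_self]
    · exact (dist_le_one_of_adj h).trans one_le_two
    · exact dist_le_two_of_adj_adj h1 h2

lemma mem_ball_iff {g : Equiv.Perm V} {v : V} {r : ℕ} :
    g ∈ ball Δ G v r ↔ g ∈ G ∧ ∀ t, Δ.dist v t ≤ r → g t = t := by
  unfold _root_.ball
  rw [Subgroup.mem_inf]
  apply and_congr Iff.rfl
  rw [Subgroup.mem_iInf]
  constructor
  · intro h t ht
    have := Subgroup.mem_iInf.mp (h t) ht
    rwa [MulAction.mem_stabilizer_iff, Equiv.Perm.smul_def] at this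
  · intro h t
    rw [Subgroup.mem_iInf]
    intro ht
    rw [MulAction.mem_stabilizer_iff, Equiv.Perm.smul_def]
    exact h t ht

lemma mem_vstab_iff {g : Equiv.Perm V} {v : V} :
    g ∈ vstab G v ↔ g ∈ G ∧ g v = v := by
  unfold vstab
  rw [Subgroup.mem_inf, MulAction.mem_stabilizer_iff, Equiv.Perm.smul_def]

lemma ball_le_G {v : V} {r : ℕ} : ball Δ G v r ≤ G := fun _ h => (mem_ball_iff.mp h).1

lemma adj_apply (hG : isAut Δ G) {g : Equiv.Perm V} (hg : g ∈ G) {a b : V}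
    (h : Δ.Adj a b) : Δ.Adj (g a) (g b) := (hG g hg a b).mpr h

/-- automorphisms preserve distance -/
lemma dist_apply (hconn : Δ.Connected) (hG : isAut Δ G) {g : Equiv.Perm V} (hg : g ∈ G)
    (v t : V) : Δ.dist (g v) (g t) = Δ.dist v t := by
  have key : ∀ (h : Equiv.Perm V), h ∈ G → ∀ a b : V, Δ.dist (h a) (h b) ≤ Δ.dist a b := by
    intro h hh a b
    obtain ⟨p, hp⟩ := (hconn a b).exists_walk_length_eq_dist
    let f : Δ →g Δ := ⟨h, fun {c d} hcd => (hG h hh c d).mpr hcd⟩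
    calc Δ.dist (h a) (h b) ≤ (p.map f).length := SimpleGraph.dist_le _
      _ = p.length := SimpleGraph.Walk.length_map _ _
      _ = Δ.dist a b := hp
  refine le_antisymm (key g hg v t) ?_
  have := key g⁻¹ (G.inv_mem hg) (g v) (g t)
  simpa using this

/-- conjugation carries balls around -/
lemma ball_conj (hconn : Δ.Connected) (hG : isAut Δ G) {g a : Equiv.Perm V} (hg : g ∈ G)
    {v : V} {r : ℕ} (ha : a ∈ ball Δ G v r) : g * a * g⁻¹ ∈ ball Δ G (g v) r := by
  obtain ⟨haG, hafix⟩ := mem_ball_iff.mp ha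
  refine mem_ball_iff.mpr ⟨G.mul_mem (G.mul_mem hg haG) (G.inv_mem hg), ?_⟩
  intro t ht
  have h1 : Δ.dist v (g⁻¹ t) ≤ r := by
    have h3 := dist_apply hconn hG (G.inv_mem hg) (g v) t
    simp only [show g⁻¹ (g v) = v from Equiv.Perm.inv_eq_iff_eq.mpr rfl] at h3
    rw [h3]
    exact ht
  have h2 : a (g⁻¹ t) = g⁻¹ t := hafix _ h1
  rw [Equiv.Perm.mul_apply, Equiv.Perm.mul_apply, h2]; simp

lemma vstab_conj (hG : isAut Δ G) {g a : Equiv.Perm V} (hg : g ∈ G) {v : V}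
    (ha : a ∈ vstab G v) : g * a * g⁻¹ ∈ vstab G (g v) := by
  obtain ⟨haG, hafix⟩ := mem_vstab_iff.mp ha
  refine mem_vstab_iff.mpr ⟨G.mul_mem (G.mul_mem hg haG) (G.inv_mem hg), ?_⟩
  simp [Equiv.Perm.mul_apply, hafix]

end GR

section GR2
open Subgroup Equiv SimpleGraph

variable {V : Type*} {Δ : SimpleGraph V} {G : Subgroup (Equiv.Perm V)}

lemma mem_locCent_iff {c : Equiv.Perm V} {v : V} :
    c ∈ locCent Δ G v ↔ c ∈ vstab G v ∧ ∀ m ∈ ball Δ G v 1, m * c = c * m := by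
  unfold locCent
  rw [Subgroup.mem_inf, Subgroup.mem_centralizer_iff]
  exact Iff.rfl

lemma locCent_le_G {c : Equiv.Perm V} {v : V} (h : c ∈ locCent Δ G v) : c ∈ G :=
  (mem_vstab_iff.mp (mem_locCent_iff.mp h).1).1

lemma locCent_conj (hconn : Δ.Connected) (hG : isAut Δ G) {g c : Equiv.Perm V} (hg : g ∈ G)
    {v : V} (hc : c ∈ locCent Δ G v) : g * c * g⁻¹ ∈ locCent Δ G (g v) := by
  obtain ⟨hvs, hcen⟩ := mem_locCent_iff.mp hc
  refine mem_locCent_iff.mpr ⟨vstab_conj hG hg hvs, ?_⟩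
  intro m hm
  have hm' : g⁻¹ * m * g ∈ ball Δ G (g⁻¹ (g v)) 1 := by
    have := ball_conj hconn hG (G.inv_mem hg) hm
    simpa [mul_assoc] using this
  rw [show g⁻¹ (g v) = v from Equiv.Perm.inv_eq_iff_eq.mpr rfl] at hm'
  have key := hcen _ hm'
  have := congrArg (fun w => g * w * g⁻¹) key
  simp only [mul_assoc] at this ⊢
  simpa [mul_inv_cancel_left, inv_mul_cancel_left] using this

lemma transOn_conj (hconn : Δ.Connected) (hG : isAut Δ G) {g : Equiv.Perm V} (hg : g ∈ G)
    {v : V} (ht : transOn Δ (locCent Δ G v) v) : transOn Δ (locCent Δ G (g v)) (g v) := by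
  intro u₁ hu₁ u₂ hu₂
  rw [SimpleGraph.mem_neighborSet] at hu₁ hu₂
  have h₁ : g⁻¹ u₁ ∈ Δ.neighborSet v := by
    rw [SimpleGraph.mem_neighborSet]
    have := adj_apply hG (G.inv_mem hg) hu₁
    simpa using this
  have h₂ : g⁻¹ u₂ ∈ Δ.neighborSet v := by
    rw [SimpleGraph.mem_neighborSet]
    have := adj_apply hG (G.inv_mem hg) hu₂
    simpa using this
  obtain ⟨n, hn, hmap⟩ := ht _ h₁ _ h₂
  refine ⟨g * n * g⁻¹, locCent_conj hconn hG hg hn, ?_⟩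
  have : (g * n * g⁻¹) u₁ = g (n (g⁻¹ u₁)) := by simp [Equiv.Perm.mul_apply]
  rw [this, hmap]
  simp

end GR2

section A1
open Subgroup Equiv SimpleGraph

variable {V : Type*} {Δ : SimpleGraph V} {G : Subgroup (Equiv.Perm V)}

lemma ball1_normalIn_edge (hconn : Δ.Connected) (hG : isAut Δ G) {x y : V} (hxy : Δ.Adj x y) :
    normalIn (ball Δ G x 1) (vstab G x ⊓ vstab G y) := by
  constructor
  · intro h hh
    obtain ⟨hhG, hfix⟩ := mem_ball_iff.mp hh
    refine Subgroup.mem_inf.mpr ⟨mem_vstab_iff.mpr ⟨hhG, hfix x (by simp [SimpleGraph.dist_self])⟩,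
      mem_vstab_iff.mpr ⟨hhG, hfix y (dist_le_one_of_adj hxy)⟩⟩
  · intro h hh k hk
    obtain ⟨hx', _⟩ := Subgroup.mem_inf.mp hh
    obtain ⟨hhG, hhx⟩ := mem_vstab_iff.mp hx'
    have := ball_conj hconn hG hhG hk
    rwa [hhx] at this

/-- The key consequence of `hE`: the local centraliser at `x` is transitive. -/
lemma locCent_trans (hconn : Δ.Connected) (hG : isAut Δ G) (hstar : StarHyp Δ G)
    {x y : V} (hxy : Δ.Adj x y)
    (hE : layer (ball Δ G x 1) ≠ layer (vstab G x ⊓ vstab G y)) :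
    transOn Δ (locCent Δ G x) x := by
  obtain ⟨K, hKsub, hKq, hKA⟩ := exists_component (ball1_normalIn_edge hconn hG hxy) hE
  have hKle : K ≤ vstab G x ⊓ vstab G y := subnormal_le hKsub
  have hcomm : ∀ a ∈ ball Δ G x 1, ∀ k ∈ K, Commute a k :=
    wielandt hKsub hKq (ball1_normalIn_edge hconn hG hxy) hKA
  have hKloc : K ≤ locCent Δ G x := by
    intro k hk
    refine mem_locCent_iff.mpr ⟨(Subgroup.mem_inf.mp (hKle hk)).1, ?_⟩
    intro m hm
    exact (hcomm m hm k hk).eq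
  -- find an element of K moving a neighbour of x
  obtain ⟨k₀, hk₀K, hk₀A⟩ : ∃ k₀ ∈ K, k₀ ∉ ball Δ G x 1 := by
    by_contra hcon
    push_neg at hcon
    exact hKA hcon
  have hk₀G : k₀ ∈ G := (mem_vstab_iff.mp (Subgroup.mem_inf.mp (hKle hk₀K)).1).1
  have hk₀x : k₀ x = x := (mem_vstab_iff.mp (Subgroup.mem_inf.mp (hKle hk₀K)).1).2
  have hk₀y : k₀ y = y := (mem_vstab_iff.mp (Subgroup.mem_inf.mp (hKle hk₀K)).2).2
  obtain ⟨z, hz, hkz⟩ : ∃ z, Δ.dist x z ≤ 1 ∧ k₀ z ≠ z := by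
    by_contra hcon
    push_neg at hcon
    exact hk₀A (mem_ball_iff.mpr ⟨hk₀G, hcon⟩)
  have hzadj : Δ.Adj x z := by
    rcases (dchar1 hconn x z).mp hz with rfl | h
    · exact absurd hk₀x hkz
    · exact h
  rcases (hstar x).2.1 with htr | hsr
  · exact htr
  · exfalso
    apply hkz
    exact hsr k₀ (hKloc hk₀K) ⟨y, (Δ.mem_neighborSet x y).mpr hxy, hk₀y⟩ z
      ((Δ.mem_neighborSet x z).mpr hzadj)

end A1

section A2
open Subgroup Equiv SimpleGraph

variable {V : Type*} {Δ : SimpleGraph V} {G : Subgroup (Equiv.Perm V)}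

lemma ball2_le_of_locCent (hconn : Δ.Connected) (hG : isAut Δ G) {u a b : V}
    (hua : Δ.Adj u a) {c : Equiv.Perm V} (hc : c ∈ locCent Δ G u) (hcab : c a = b) :
    ball Δ G a 2 ≤ ball Δ G b 2 := by
  intro g hg
  have hgu1 : g ∈ ball Δ G u 1 := by
    obtain ⟨hgG, hfix⟩ := mem_ball_iff.mp hg
    refine mem_ball_iff.mpr ⟨hgG, ?_⟩
    intro t ht
    rcases (dchar1 hconn u t).mp ht with rfl | h
    · exact hfix t ((dchar2 hconn a t).mpr (Or.inr (Or.inl hua.symm)))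
    · exact hfix t ((dchar2 hconn a t).mpr (Or.inr (Or.inr ⟨u, hua.symm, h⟩)))
  obtain ⟨hcv, hcen⟩ := mem_locCent_iff.mp hc
  have hcomm := hcen g hgu1
  have hfixed : c * g * c⁻¹ = g := by
    rw [← hcomm]
    group
  have := ball_conj hconn hG (locCent_le_G hc) hg
  rwa [hfixed, hcab] at this

lemma ball2_const (hconn : Δ.Connected) (hG : isAut Δ G) {u : V}
    (htr : transOn Δ (locCent Δ G u) u) {w w' : V} (hw : Δ.Adj u w) (hw' : Δ.Adj u w') :
    ball Δ G w 2 = ball Δ G w' 2 := by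
  obtain ⟨c, hc, hcw⟩ := htr w ((Δ.mem_neighborSet u w).mpr hw) w' ((Δ.mem_neighborSet u w').mpr hw')
  refine le_antisymm (ball2_le_of_locCent hconn hG hw hc hcw) ?_
  have hc' : c⁻¹ ∈ locCent Δ G u := (locCent Δ G u).inv_mem hc
  have hcw' : c⁻¹ w' = w := by rw [← hcw]; simp
  exact ball2_le_of_locCent hconn hG hw' hc' hcw'

/-- first conclusion -/
lemma first_conclusion (hconn : Δ.Connected) (hG : isAut Δ G) {x y : V} (hxy : Δ.Adj x y)
    (htr : transOn Δ (locCent Δ G x) x) :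
    ball Δ G x 1 ⊓ ball Δ G y 1 = ball Δ G x 2 := by
  apply le_antisymm
  · intro g hg
    obtain ⟨hg1, hg2⟩ := Subgroup.mem_inf.mp hg
    obtain ⟨hgG, hfix1⟩ := mem_ball_iff.mp hg1
    obtain ⟨_, hfix2⟩ := mem_ball_iff.mp hg2
    refine mem_ball_iff.mpr ⟨hgG, ?_⟩
    intro t ht
    rcases (dchar2 hconn x t).mp ht with rfl | h | ⟨m, hxm, hmt⟩
    · exact hfix1 t (by simp [SimpleGraph.dist_self])
    · exact hfix1 t (dist_le_one_of_adj h)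
    · obtain ⟨c, hc, hcy⟩ := htr y ((Δ.mem_neighborSet x y).mpr hxy) m
        ((Δ.mem_neighborSet x m).mpr hxm)
      have hcG : c ∈ G := locCent_le_G hc
      have hs : Δ.Adj y (c⁻¹ t) := by
        have := adj_apply hG (G.inv_mem hcG) hmt
        rwa [show c⁻¹ m = y by rw [← hcy]; simp] at this
      have hgs : g (c⁻¹ t) = c⁻¹ t := hfix2 _ (dist_le_one_of_adj hs)
      have hcomm := (mem_locCent_iff.mp hc).2 g hg1
      have : (g * c) (c⁻¹ t) = (c * g) (c⁻¹ t) := by rw [hcomm]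
      simp only [Equiv.Perm.mul_apply] at this
      rw [hgs] at this
      have h5 : c (c⁻¹ t) = t := by simp
      rw [h5] at this
      exact this
  · intro g hg
    obtain ⟨hgG, hfix⟩ := mem_ball_iff.mp hg
    refine Subgroup.mem_inf.mpr ⟨mem_ball_iff.mpr ⟨hgG, fun t ht => hfix t (ht.trans one_le_two)⟩,
      mem_ball_iff.mpr ⟨hgG, ?_⟩⟩
    intro t ht
    rcases (dchar1 hconn y t).mp ht with rfl | h
    · exact hfix t (dist_le_one_of_adj hxy |>.trans one_le_two)
    · exact hfix t ((dchar2 hconn x t).mpr (Or.inr (Or.inr ⟨y, hxy, h⟩)))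

end A2

section A3
open Subgroup Equiv SimpleGraph

variable {V : Type*} {Δ : SimpleGraph V} {G : Subgroup (Equiv.Perm V)}

lemma main_walk (hconn : Δ.Connected) (hG : isAut Δ G) (hstar : StarHyp Δ G)
    {x y : V} (hxy : Δ.Adj x y) (htrx : transOn Δ (locCent Δ G x) x) :
    ∀ n : ℕ, ∀ (u : V) (r : Δ.Walk u x), r.length = n →
      (Even n → transOn Δ (locCent Δ G u) u) ∧
      (¬ Even n → ball Δ G u 2 = ball Δ G y 2) := by
  intro n
  induction n using Nat.strong_induction_on with
  | _ n ih =>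
    match n with
    | 0 =>
      intro u r hr
      have : u = x := SimpleGraph.Walk.eq_of_length_eq_zero hr
      subst this
      exact ⟨fun _ => htrx, fun h => absurd (Nat.even_iff.mpr rfl) h⟩
    | 1 =>
      intro u r hr
      cases r with
      | nil => simp at hr
      | cons hadj q =>
        have hq : q.length = 0 := by simpa using hr
        have := SimpleGraph.Walk.eq_of_length_eq_zero hq
        subst this
        refine ⟨fun h => absurd h (by simp), fun _ => ?_⟩
        exact ball2_const hconn hG htrx hadj.symm hxy
    | (n + 2) =>
      intro u r hr
      cases r with
      | nil => simp at hr
      | cons h₁ r₁ =>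
        cases r₁ with
        | nil => simp at hr
        | cons h₂ r₂ =>
          rename_i a b
          have hlen : r₂.length = n := by simpa using hr
          have hab : (SimpleGraph.Walk.cons h₂ r₂).length = n + 1 := by simpa using hlen
          obtain ⟨IHb1, IHb2⟩ := ih n (by omega) b r₂ hlen
          obtain ⟨IHa1, _⟩ := ih (n + 1) (by omega) a (SimpleGraph.Walk.cons h₂ r₂) hab
          constructor
          · intro heven
            have hn : Even n := by
              rw [Nat.even_iff] at heven ⊢; omega
            have hTb := IHb1 hn
            obtain ⟨g, hg, hgb⟩ := (hstar a).1 b ((Δ.mem_neighborSet a b).mpr h₂) u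
              ((Δ.mem_neighborSet a u).mpr h₁.symm)
            have hgG : g ∈ G := (mem_vstab_iff.mp hg).1
            have := transOn_conj hconn hG hgG hTb
            rwa [hgb] at this
          · intro hodd
            have hn : ¬ Even n := by
              rw [Nat.even_iff] at hodd ⊢; omega
            have hn1 : Even (n + 1) := by
              rw [Nat.even_iff] at hn ⊢; omega
            have hTa := IHa1 hn1
            have e1 : ball Δ G u 2 = ball Δ G b 2 :=
              ball2_const hconn hG hTa h₁.symm h₂
            rw [e1, IHb2 hn]

lemma second_conclusion (hconn : Δ.Connected) (hG : isAut Δ G) (hstar : StarHyp Δ G)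
    {x y : V} (hxy : Δ.Adj x y) (htrx : transOn Δ (locCent Δ G x) x) :
    ball Δ G y 2 = ⊥ := by
  rw [eq_bot_iff]
  intro g hg
  rw [Subgroup.mem_bot]
  have hfix : ∀ v, g v = v := by
    intro v
    obtain ⟨p⟩ := hconn v x
    by_cases he : Even p.length
    · cases p with
      | nil =>
        exact (mem_ball_iff.mp hg).2 x (dist_le_one_of_adj hxy.symm |>.trans one_le_two)
      | cons h q =>
        rename_i a
        have hodd : ¬ Even q.length := by
          rw [SimpleGraph.Walk.length_cons, Nat.even_iff] at he
          rw [Nat.even_iff]; omega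
        have := (main_walk hconn hG hstar hxy htrx q.length a q rfl).2 hodd
        have hg' : g ∈ ball Δ G a 2 := by rw [this]; exact hg
        exact (mem_ball_iff.mp hg').2 v (dist_le_one_of_adj h.symm |>.trans one_le_two)
    · have := (main_walk hconn hG hstar hxy htrx p.length v p rfl).2 he
      have hg' : g ∈ ball Δ G v 2 := by rw [this]; exact hg
      exact (mem_ball_iff.mp hg').2 v (by simp [SimpleGraph.dist_self])
  exact Equiv.ext hfix

end A3

theorem stmt2 {V : Type*} [Fintype V] (Δ : SimpleGraph V) (G : Subgroup (Equiv.Perm V))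
    (hconn : Δ.Connected) (hG : isAut Δ G) (hstar : StarHyp Δ G)
    {x y : V} (hxy : Δ.Adj x y)
    (hE : layer (ball Δ G x 1) ≠ layer (vstab G x ⊓ vstab G y)) :
    ball Δ G x 1 ⊓ ball Δ G y 1 = ball Δ G x 2 ∧ ball Δ G y 2 = ⊥ := by
  have htrx := locCent_trans hconn hG hstar hxy hE
  exact ⟨first_conclusion hconn hG hxy htrx, second_conclusion hconn hG hstar hxy htrx⟩
end

section
/- Let Δ be a finite connected graph, G ≤ Aut(Δ), p a prime, (x,y) an arc, S_{x,z} = O_p(G_{x,z}) for z ∈ Δ(x), and E_x = ⟨S_{x,z} : z ∈ Δ(x)⟩. Then [G_x^{[1]}, E_x] ≤ O_p(G_x^{[1]}). -/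
open Equiv Subgroup

open scoped commutatorElement

section Aux

variable {V : Type*}

lemma mem_vstab' {G : Subgroup (Equiv.Perm V)} {x : V} {g : Equiv.Perm V} :
    g ∈ vstab G x ↔ g ∈ G ∧ g x = x := by
  simp [vstab, MulAction.mem_stabilizer_iff, Perm.smul_def]

lemma mem_ball' {Δ : SimpleGraph V} {G : Subgroup (Equiv.Perm V)} {x : V} {i : ℕ}
    {g : Equiv.Perm V} :
    g ∈ ball Δ G x i ↔ g ∈ G ∧ ∀ z, Δ.dist x z ≤ i → g z = z := by
  simp [ball, MulAction.mem_stabilizer_iff, Perm.smul_def, Subgroup.mem_iInf]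

lemma dist_le_one_iff' {Δ : SimpleGraph V} (hconn : Δ.Connected) {x w : V} :
    Δ.dist x w ≤ 1 ↔ w = x ∨ Δ.Adj x w := by
  constructor
  · intro h
    rcases eq_or_ne w x with rfl | hne
    · exact Or.inl rfl
    · exact Or.inr (SimpleGraph.dist_eq_one_iff_adj.mp
        (le_antisymm h (hconn.pos_dist_of_ne (Ne.symm hne))))
  · rintro (rfl | h)
    · simp [SimpleGraph.dist_self]
    · exact le_of_eq (SimpleGraph.dist_eq_one_iff_adj.mpr h)

end Aux

theorem stmt4 {V : Type*} [Fintype V] (Δ : SimpleGraph V) (G : Subgroup (Equiv.Perm V))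
    (hconn : Δ.Connected) (hG : isAut Δ G)
    (htrans : ∀ x : V, transOn Δ (vstab G x) x)
    (p : ℕ) (hp : p.Prime) {x y : V} (hxy : Δ.Adj x y) :
    ⁅ball Δ G x 1, Ep Δ G p x⁆ ≤ Op p (ball Δ G x 1) := by
  classical
  set A := ball Δ G x 1 with hA
  set N := Op p A with hN
  -- A is normalized by vstab G x
  have hAnorm : ∀ g ∈ vstab G x, ∀ a ∈ A, g * a * g⁻¹ ∈ A := by
    intro g hg a ha
    rw [mem_vstab'] at hg
    rw [hA, mem_ball'] at ha ⊢
    refine ⟨mul_mem (mul_mem hg.1 ha.1) (inv_mem hg.1), ?_⟩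
    intro w hw
    have hginv : g⁻¹ x = x := by
      apply g.injective; rw [← Equiv.Perm.mul_apply, mul_inv_cancel, Equiv.Perm.one_apply, hg.2]
    have hdw : Δ.dist x (g⁻¹ w) ≤ 1 := by
      rcases (dist_le_one_iff' hconn).mp hw with rfl | hadj
      · rw [hginv]; simp [SimpleGraph.dist_self]
      · refine (dist_le_one_iff' hconn).mpr (Or.inr ?_)
        have := (hG g⁻¹ (inv_mem hg.1) x w).mpr hadj
        rwa [hginv] at this
    have : a (g⁻¹ w) = g⁻¹ w := ha.2 _ hdw
    rw [Equiv.Perm.mul_apply, Equiv.Perm.mul_apply, this, ← Equiv.Perm.mul_apply, mul_inv_cancel, Equiv.Perm.one_apply]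
  -- A ≤ vstab G x
  have hAx : A ≤ vstab G x := by
    intro a ha
    rw [hA, mem_ball'] at ha
    exact mem_vstab'.mpr ⟨ha.1, ha.2 x (by simp [SimpleGraph.dist_self])⟩
  -- A ≤ G_{x,z} for z adjacent to x
  have hAxz : ∀ z, Δ.Adj x z → A ≤ vstab G x ⊓ vstab G z := by
    intro z hz a ha
    refine ⟨hAx ha, ?_⟩
    rw [hA, mem_ball'] at ha
    exact mem_vstab'.mpr ⟨ha.1, ha.2 z ((dist_le_one_iff' hconn).mpr (Or.inr hz))⟩
  -- N is normalized by vstab G x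
  have hNnorm : ∀ g ∈ vstab G x, ∀ n ∈ N, g * n * g⁻¹ ∈ N := by
    intro g hg n hn
    have hmap : Subgroup.map (MulAut.conj g).toMonoidHom N ≤ N := by
      rw [hN]
      show Subgroup.map _ (sSup _) ≤ _
      rw [(Subgroup.gc_map_comap (MulAut.conj g).toMonoidHom).l_sSup]
      refine iSup₂_le fun K hK => le_sSup ?_
      refine ⟨⟨?_, ?_⟩, hK.2.map _⟩
      · rintro _ ⟨k, hk, rfl⟩
        exact hAnorm g hg k (hK.1.1 hk)
      · rintro h hh _ ⟨k, hk, rfl⟩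
        have hh' : g⁻¹ * h * g ∈ A := by
          have := hAnorm g⁻¹ (inv_mem hg) h hh
          rwa [inv_inv] at this
        refine ⟨(g⁻¹ * h * g) * k * (g⁻¹ * h * g)⁻¹,
          hK.1.2 _ hh' k hk, ?_⟩
        simp only [MulEquiv.coe_toMonoidHom, MulAut.conj_apply]
        group
    have : (MulAut.conj g).toMonoidHom n ∈ Subgroup.map (MulAut.conj g).toMonoidHom N :=
      Subgroup.mem_map_of_mem _ hn
    simpa [MulAut.conj_apply] using hmap this
  -- the auxiliary subgroup T
  let T : Subgroup (Equiv.Perm V) :=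
    { carrier := {g | g ∈ vstab G x ∧ ∀ a ∈ A, ⁅a, g⁆ ∈ N}
      one_mem' := ⟨one_mem _, fun a _ => by
        simp only [commutatorElement_def, mul_one, inv_one, mul_inv_cancel]
        exact one_mem N⟩
      mul_mem' := by
        rintro g h ⟨hg1, hg2⟩ ⟨hh1, hh2⟩
        refine ⟨mul_mem hg1 hh1, fun a ha => ?_⟩
        have hcomm : ⁅a, g * h⁆ = ⁅a, g⁆ * (g * ⁅a, h⁆ * g⁻¹) := by group
        rw [hcomm]
        exact mul_mem (hg2 a ha) (hNnorm g hg1 _ (hh2 a ha))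
      inv_mem' := by
        rintro g ⟨hg1, hg2⟩
        refine ⟨inv_mem hg1, fun a ha => ?_⟩
        have hcomm : ⁅a, g⁻¹⁆ = g⁻¹ * ⁅a, g⁆⁻¹ * g⁻¹⁻¹ := by group
        rw [hcomm]
        exact hNnorm g⁻¹ (inv_mem hg1) _ (inv_mem (hg2 a ha)) }
  -- E_x ≤ T
  have hET : Ep Δ G p x ≤ T := by
    refine iSup₂_le fun z hz => ?_
    have hzadj : Δ.Adj x z := hz
    refine sSup_le fun K hK => ?_
    intro g hg
    have hgxz : g ∈ vstab G x ⊓ vstab G z := hK.1.1 hg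
    refine ⟨hgxz.1, fun a ha => ?_⟩
    -- ⁅a, g⁆ ∈ A ⊓ K
    have hmemK : ⁅a, g⁆ ∈ K := by
      have h1 : a * g * a⁻¹ ∈ K := hK.1.2 a (hAxz z hzadj ha) g hg
      have : ⁅a, g⁆ = (a * g * a⁻¹) * g⁻¹ := by group
      rw [this]; exact mul_mem h1 (inv_mem hg)
    have hmemA : ⁅a, g⁆ ∈ A := by
      have h1 : g * a⁻¹ * g⁻¹ ∈ A := hAnorm g hgxz.1 a⁻¹ (inv_mem ha)
      have : ⁅a, g⁆ = a * (g * a⁻¹ * g⁻¹) := by group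
      rw [this]; exact mul_mem ha h1
    -- A ⊓ K ≤ N
    have hAK : A ⊓ K ≤ N := by
      refine le_sSup ⟨⟨inf_le_left, ?_⟩, hK.2.to_le inf_le_right⟩
      intro h hh k hk
      exact ⟨hAnorm h (hAx hh) k hk.1, hK.1.2 h (hAxz z hzadj hh) k hk.2⟩
    exact hAK ⟨hmemA, hmemK⟩
  rw [Subgroup.commutator_le]
  intro a ha e he
  exact (hET he).2 a ha
end

section
/- Assume Hypothesis (⋆). Let p be a prime, (x,y) an arc, E_x = ⟨O_p(G_{x,z}) : z ∈ Δ(x)⟩ and E_y = ⟨O_p(G_{z,y}) : z ∈ Δ(y)⟩. If E_x ⊄ G_x^{[1]} and E_y ≤ G_y^{[1]}, then G_{x,y}^{[1]} = G_x^{[2]} and G_y^{[2]} = G_y^{[3]}. -/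
open Equiv Subgroup

set_option linter.unusedSectionVars false
set_option maxHeartbeats 1000000

open Pointwise in
private lemma pgroup_sSup' {M : Type*} [Group M] [Finite M] {p : ℕ} (hp : p.Prime)
    (S : Set (Subgroup M)) (hS : ∀ K ∈ S, IsPGroup p K)
    (hn : ∀ K ∈ S, ∀ J ∈ S, ∀ k ∈ K, ∀ j ∈ J, k * j * k⁻¹ ∈ J) :
    IsPGroup p ↥(sSup S) := by
  haveI := Fact.mk hp
  set T := sSup S with hT
  have hnormalizer : ∀ K ∈ S, T ≤ Subgroup.normalizer (K : Set M) := by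
    intro K hK
    refine sSup_le fun J hJ j hj => Subgroup.mem_normalizer_iff.mpr fun k => ?_
    constructor
    · intro hk; exact hn J hJ K hK j hj k hk
    · intro hk
      have h2 := hn J hJ K hK j⁻¹ (inv_mem hj) _ hk
      have h3 : j⁻¹ * (j * k * j⁻¹) * j⁻¹⁻¹ = k := by group
      rwa [h3] at h2
  obtain ⟨P⟩ : Nonempty (Sylow p ↥T) := inferInstance
  have hle : ∀ K ∈ S, K ≤ Subgroup.map T.subtype ↑P := by
    intro K hK
    have hKT : K ≤ T := le_sSup hK
    have hK' : IsPGroup p (K.subgroupOf T) :=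
      (hS K hK).comap_of_injective T.subtype Subtype.coe_injective
    have hnormal : (K.subgroupOf T).Normal := by
      constructor
      intro n hnmem t
      rw [Subgroup.mem_subgroupOf] at hnmem ⊢
      have ht : (t : M) ∈ Subgroup.normalizer (K : Set M) := hnormalizer K hK t.2
      have := (Subgroup.mem_normalizer_iff.mp ht _).mp hnmem
      simpa using this
    obtain ⟨Q, hQ⟩ := hK'.exists_le_sylow
    obtain ⟨g, hg⟩ := MulAction.exists_smul_eq ↥T Q P
    have h4 : K.subgroupOf T ≤ ↑P := by
      have h5 : MulAut.conj g • K.subgroupOf T = K.subgroupOf T := @Subgroup.Normal.conj_smul_eq_self _ _ g _ hnormal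
      calc K.subgroupOf T = MulAut.conj g • K.subgroupOf T := h5.symm
        _ ≤ MulAut.conj g • (Q : Subgroup ↥T) :=
            Subgroup.pointwise_smul_le_pointwise_smul_iff.mpr hQ
        _ = ((g • Q : Sylow p ↥T) : Subgroup ↥T) := (Sylow.coe_subgroup_smul).symm
        _ = ↑P := by rw [hg]
    calc K = (K.subgroupOf T).map T.subtype := by
          rw [Subgroup.subgroupOf_map_subtype, inf_eq_left.mpr hKT]
      _ ≤ Subgroup.map T.subtype ↑P := Subgroup.map_mono h4
  have hTP : T ≤ Subgroup.map T.subtype ↑P := sSup_le hle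
  exact IsPGroup.to_le (P.isPGroup'.map T.subtype) hTP

namespace StmtAux

variable {V : Type*} [Fintype V] {Δ : SimpleGraph V} {G : Subgroup (Equiv.Perm V)}

lemma mem_vstab {a : Perm V} {x : V} : a ∈ vstab G x ↔ a ∈ G ∧ a x = x := by
  simp [vstab, Subgroup.mem_inf, MulAction.mem_stabilizer_iff, Equiv.Perm.smul_def]

lemma mem_ball {a : Perm V} {x : V} {i : ℕ} :
    a ∈ ball Δ G x i ↔ a ∈ G ∧ ∀ z, Δ.dist x z ≤ i → a z = z := by
  simp [ball, Subgroup.mem_inf, Subgroup.mem_iInf, MulAction.mem_stabilizer_iff,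
    Equiv.Perm.smul_def]

lemma vstab_le_G {x : V} : vstab G x ≤ G := inf_le_left

lemma ball_le_G {x : V} {i : ℕ} : ball Δ G x i ≤ G := inf_le_left

lemma adj_dist_le {x z : V} (h : Δ.Adj x z) : Δ.dist x z ≤ 1 :=
  le_of_eq (SimpleGraph.dist_eq_one_iff_adj.mpr h)

lemma dist_decomp (hconn : Δ.Connected) (x w : V) (n : ℕ) (h : Δ.dist x w ≤ n + 1) :
    w = x ∨ ∃ z, Δ.Adj x z ∧ Δ.dist z w ≤ n := by
  by_cases hxw : x = w
  · exact Or.inl hxw.symm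
  · have h0 : Δ.dist x w ≠ 0 := fun e => hxw (hconn.dist_eq_zero_iff.mp e)
    obtain ⟨p, hp⟩ := SimpleGraph.exists_walk_of_dist_ne_zero h0
    cases p with
    | nil => exact Or.inl rfl
    | @cons _ z _ hadj q =>
      right
      refine ⟨z, hadj, ?_⟩
      have hq : Δ.dist z w ≤ q.length := SimpleGraph.dist_le q
      have : q.length + 1 = Δ.dist x w := by simpa using hp
      omega

lemma ball_mono {x : V} {i j : ℕ} (h : i ≤ j) : ball Δ G x j ≤ ball Δ G x i := by
  intro a ha
  rw [mem_ball] at ha ⊢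
  exact ⟨ha.1, fun z hz => ha.2 z (hz.trans h)⟩

lemma ball_adj (hconn : Δ.Connected) {x z : V} (h : Δ.Adj x z) (i : ℕ) :
    ball Δ G x (i + 1) ≤ ball Δ G z i := by
  intro a ha
  rw [mem_ball] at ha ⊢
  refine ⟨ha.1, fun w hw => ha.2 w ?_⟩
  have h1 := hconn.dist_triangle (u := x) (v := z) (w := w)
  have h2 := adj_dist_le h
  omega

lemma ball_one_le_vstab {x z : V} (h : z = x ∨ Δ.Adj x z) : ball Δ G x 1 ≤ vstab G z := by
  intro a ha
  rw [mem_ball] at ha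
  rw [mem_vstab]
  refine ⟨ha.1, ?_⟩
  rcases h with rfl | hadj
  · exact ha.2 z (by simp [SimpleGraph.dist_self])
  · exact ha.2 z (adj_dist_le hadj)

lemma dist_conj (hconn : Δ.Connected) (hG : isAut Δ G) {g : Perm V} (hg : g ∈ G) (u v : V) :
    Δ.dist (g u) (g v) = Δ.dist u v := by
  have key : ∀ h ∈ G, ∀ a b : V, Δ.dist (h a) (h b) ≤ Δ.dist a b := by
    intro h hh a b
    obtain ⟨p, hp⟩ := hconn.exists_walk_length_eq_dist a b
    let f : Δ →g Δ := ⟨h, fun {u v} hadj => (hG h hh u v).mpr hadj⟩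
    calc Δ.dist (h a) (h b) ≤ (p.map f).length := SimpleGraph.dist_le _
      _ = p.length := SimpleGraph.Walk.length_map _ _
      _ = Δ.dist a b := hp
  refine le_antisymm (key g hg u v) ?_
  have h2 := key g⁻¹ (inv_mem hg) (g u) (g v)
  simpa using h2

lemma memball_conj (hconn : Δ.Connected) (hG : isAut Δ G) {g a : Perm V} (hg : g ∈ G)
    {x : V} {i : ℕ} (ha : a ∈ ball Δ G x i) : g * a * g⁻¹ ∈ ball Δ G (g x) i := by
  rw [mem_ball] at ha ⊢
  refine ⟨mul_mem (mul_mem hg ha.1) (inv_mem hg), fun z hz => ?_⟩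
  have h1 : Δ.dist x (g⁻¹ z) ≤ i := by
    have h2 := dist_conj hconn hG (inv_mem hg) (g x) z
    have h2' : Δ.dist x (g⁻¹ z) = Δ.dist (g x) z := by simpa using h2
    rw [h2']
    exact hz
  have h3 : a (g⁻¹ z) = g⁻¹ z := ha.2 _ h1
  simp [Equiv.Perm.mul_apply, h3]
  rw [← Equiv.Perm.inv_def, h3]; simp

/-- conjugation as a monoid hom -/
def cj (g : Perm V) : Perm V →* Perm V := (MulAut.conj g).toMonoidHom

@[simp] lemma cj_apply (g a : Perm V) : cj g a = g * a * g⁻¹ := rfl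

lemma cj_injective (g : Perm V) : Function.Injective (cj (V := V) g) := (MulAut.conj g).injective

lemma map_cj_map_cj (g : Perm V) (K : Subgroup (Perm V)) :
    (K.map (cj g)).map (cj g⁻¹) = K := by
  rw [Subgroup.map_map]
  have : (cj g⁻¹).comp (cj g) = MonoidHom.id (Perm V) := by
    ext a
    simp only [MonoidHom.comp_apply, cj_apply, MonoidHom.id_apply]
    group
  rw [this, Subgroup.map_id]

lemma map_cj_map_cj' (g : Perm V) (K : Subgroup (Perm V)) :
    (K.map (cj g⁻¹)).map (cj g) = K := by
  have := map_cj_map_cj g⁻¹ K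
  rwa [inv_inv] at this

lemma normalIn_map (g : Perm V) {K H : Subgroup (Perm V)} (h : normalIn K H) :
    normalIn (K.map (cj g)) (H.map (cj g)) := by
  refine ⟨Subgroup.map_mono h.1, ?_⟩
  rintro h' ⟨a, ha, rfl⟩ k' ⟨k, hk, rfl⟩
  rw [← map_inv, ← map_mul, ← map_mul]
  exact Subgroup.mem_map_of_mem _ (h.2 a ha k hk)

lemma map_biSup (f : Perm V →* Perm V) (s : Set V) (K : V → Subgroup (Perm V)) :
    (⨆ z ∈ s, K z).map f = ⨆ z ∈ s, (K z).map f := by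
  rw [(Subgroup.gc_map_comap f).l_iSup]
  exact iSup_congr fun z => (Subgroup.gc_map_comap f).l_iSup

lemma Op_map (g : Perm V) (p : ℕ) (H : Subgroup (Perm V)) :
    (Op p H).map (cj g) = Op p (H.map (cj g)) := by
  apply le_antisymm
  · rw [Op, (Subgroup.gc_map_comap (cj g)).l_sSup]
    exact iSup₂_le fun K hK => le_sSup ⟨normalIn_map g hK.1, hK.2.map _⟩
  · refine sSup_le fun K' hK' => ?_
    have h1 : K' = (K'.map (cj g⁻¹)).map (cj g) := (map_cj_map_cj' g K').symm
    rw [h1]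
    refine Subgroup.map_mono (le_sSup ?_)
    refine ⟨?_, hK'.2.map _⟩
    have h2 := normalIn_map g⁻¹ hK'.1
    rwa [map_cj_map_cj g H] at h2

lemma map_cj_self {h : Perm V} {H : Subgroup (Perm V)} (hh : h ∈ H) : H.map (cj h) = H := by
  ext b
  simp only [Subgroup.mem_map, cj_apply]
  constructor
  · rintro ⟨a, ha, rfl⟩
    exact mul_mem (mul_mem hh ha) (inv_mem hh)
  · intro hb
    refine ⟨h⁻¹ * b * h, mul_mem (mul_mem (inv_mem hh) hb) hh, ?_⟩
    group

lemma Op_le {p : ℕ} {H : Subgroup (Perm V)} : Op p H ≤ H :=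
  sSup_le fun _ hK => hK.1.1

lemma Op_conj_mem {p : ℕ} {H : Subgroup (Perm V)} {h q : Perm V} (hh : h ∈ H)
    (hq : q ∈ Op p H) : h * q * h⁻¹ ∈ Op p H := by
  have he : (Op p H).map (cj h) = Op p H := by rw [Op_map, map_cj_self hh]
  rw [← he]
  exact ⟨q, hq, rfl⟩

lemma Op_pgroup (hp : p.Prime) (H : Subgroup (Perm V)) : IsPGroup p ↥(Op p H) :=
  pgroup_sSup' hp _ (fun _ hK => hK.2)
    (fun K hK J hJ k hk j hj => hJ.1.2 k (hK.1.1 hk) j hj)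

lemma map_cj_vstab (hG : isAut Δ G) {g : Perm V} (hg : g ∈ G) (x : V) :
    (vstab G x).map (cj g) = vstab G (g x) := by
  ext b
  simp only [Subgroup.mem_map, cj_apply, mem_vstab]
  constructor
  · rintro ⟨a, ⟨haG, hax⟩, rfl⟩
    refine ⟨mul_mem (mul_mem hg haG) (inv_mem hg), ?_⟩
    simp [Equiv.Perm.mul_apply, hax]
  · rintro ⟨hbG, hbx⟩
    refine ⟨g⁻¹ * b * g, ⟨mul_mem (mul_mem (inv_mem hg) hbG) hg, ?_⟩, by group⟩
    simp [Equiv.Perm.mul_apply]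
    have : g⁻¹ (b (g x)) = g⁻¹ (g x) := by rw [hbx]
    simpa using this

lemma map_cj_ball (hconn : Δ.Connected) (hG : isAut Δ G) {g : Perm V} (hg : g ∈ G)
    (x : V) (i : ℕ) : (ball Δ G x i).map (cj g) = ball Δ G (g x) i := by
  ext b
  simp only [Subgroup.mem_map, cj_apply]
  constructor
  · rintro ⟨a, ha, rfl⟩
    exact memball_conj hconn hG hg ha
  · intro hb
    refine ⟨g⁻¹ * b * g, ?_, by group⟩
    have h2 := memball_conj hconn hG (inv_mem hg) hb
    have h3 : g⁻¹ (g x) = x := by simp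
    rw [h3] at h2
    simpa [mul_assoc] using h2

lemma Ep_le_vstab {p : ℕ} {x : V} : Ep Δ G p x ≤ vstab G x :=
  iSup₂_le fun _ _ => Op_le.trans inf_le_left

lemma Ep_map (hconn : Δ.Connected) (hG : isAut Δ G) {g : Perm V} (hg : g ∈ G) (p : ℕ) (x : V) :
    (Ep Δ G p x).map (cj g) = Ep Δ G p (g x) := by
  rw [Ep, map_biSup]
  have hterm : ∀ z : V, (Op p (vstab G x ⊓ vstab G z)).map (cj g)
      = Op p (vstab G (g x) ⊓ vstab G (g z)) := by
    intro z
    rw [Op_map, Subgroup.map_inf _ _ _ (cj_injective g), map_cj_vstab hG hg,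
      map_cj_vstab hG hg]
  apply le_antisymm
  · refine iSup₂_le fun z hz => ?_
    rw [hterm z]
    have hzadj : Δ.Adj (g x) (g z) := (hG g hg x z).mpr hz
    exact le_iSup₂_of_le (g z) hzadj le_rfl
  · refine iSup₂_le fun z' hz' => ?_
    have hadj : Δ.Adj x (g⁻¹ z') := by
      have h1 := (hG g hg x (g⁻¹ z')).mp
      have h2 : g (g⁻¹ z') = z' := by simp
      rw [h2] at h1
      exact h1 hz'
    refine le_iSup₂_of_le (g⁻¹ z') hadj ?_
    rw [hterm (g⁻¹ z')]
    have h2 : g (g⁻¹ z') = z' := by simp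
    rw [h2]

lemma memEp_conj (hconn : Δ.Connected) (hG : isAut Δ G) {g a : Perm V} (hg : g ∈ G)
    {p : ℕ} {x : V} (ha : a ∈ Ep Δ G p x) : g * a * g⁻¹ ∈ Ep Δ G p (g x) := by
  rw [← Ep_map hconn hG hg p x]
  exact ⟨a, ha, rfl⟩

lemma goal1 (hconn : Δ.Connected) (hG : isAut Δ G) (hstar : StarHyp Δ G)
    {p : ℕ} (hp : p.Prime) {x y : V} (hxy : Δ.Adj x y)
    (hEx : ¬ Ep Δ G p x ≤ ball Δ G x 1) (hEy : Ep Δ G p y ≤ ball Δ G y 1) :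
    ball Δ G x 1 ⊓ ball Δ G y 1 = ball Δ G x 2 := by
  have hball_le : ∀ w : V, Δ.Adj x w → ball Δ G x 1 ≤ vstab G x ⊓ vstab G w := fun w hw =>
    le_inf (ball_one_le_vstab (Or.inl rfl)) (ball_one_le_vstab (Or.inr hw))
  have hQ_le_G : ∀ w : V, Op p (vstab G x ⊓ vstab G w) ≤ G := fun w =>
    Op_le.trans (inf_le_left.trans vstab_le_G)
  have hQx : ∀ w : V, Op p (vstab G x ⊓ vstab G w) ≤ vstab G x := fun w =>
    Op_le.trans inf_le_left
  -- E_x acts transitively on Δ(x)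
  have htrans : transOn Δ (Ep Δ G p x) x := by
    rcases (hstar x).2.2 p hp with h | hsr
    · exact h
    · exfalso
      have hex : ¬ ∀ w ∈ Δ.neighborSet x, Op p (vstab G x ⊓ vstab G w) ≤ ball Δ G x 1 := by
        intro hall
        exact hEx (iSup₂_le hall)
      push_neg at hex
      obtain ⟨z0, hz0, hq⟩ := hex
      obtain ⟨q, hqQ, hqb⟩ := SetLike.not_le_iff_exists.mp hq
      have hqEp : q ∈ Ep Δ G p x := by
        have hle : Op p (vstab G x ⊓ vstab G z0) ≤ Ep Δ G p x := le_iSup₂_of_le z0 hz0 le_rfl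
        exact hle hqQ
      have hqz0 : q z0 = z0 := (mem_vstab.mp ((Op_le.trans inf_le_right) hqQ)).2
      have hqx : q x = x := (mem_vstab.mp (hQx z0 hqQ)).2
      have hfix := hsr q hqEp ⟨z0, hz0, hqz0⟩
      apply hqb
      rw [mem_ball]
      refine ⟨hQ_le_G z0 hqQ, fun z hz => ?_⟩
      rcases dist_decomp hconn x z 0 hz with rfl | ⟨w, hw, hwz⟩
      · exact hqx
      · have hwzeq : w = z := hconn.dist_eq_zero_iff.mp (Nat.le_zero.mp hwz)
        subst hwzeq
        exact hfix w hw
  -- the join T of the subgroups A w := O_p(G_{x,w}) ⊓ G_x^{[1]} is contained in ball y 1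
  have hA_le : ∀ w ∈ Δ.neighborSet x,
      Op p (vstab G x ⊓ vstab G w) ⊓ ball Δ G x 1 ≤ ball Δ G y 1 := by
    have hTPgrp : IsPGroup p
        ↥(⨆ w ∈ Δ.neighborSet x, Op p (vstab G x ⊓ vstab G w) ⊓ ball Δ G x 1) := by
      have him : (⨆ w ∈ Δ.neighborSet x, Op p (vstab G x ⊓ vstab G w) ⊓ ball Δ G x 1)
          = sSup ((fun w => Op p (vstab G x ⊓ vstab G w) ⊓ ball Δ G x 1) '' Δ.neighborSet x) :=
        (sSup_image).symm
      rw [him]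
      refine pgroup_sSup' hp _ ?_ ?_
      · rintro K ⟨w, hw, rfl⟩
        exact IsPGroup.to_le (Op_pgroup hp _) inf_le_left
      · rintro K ⟨w, hw, rfl⟩ J ⟨w', hw', rfl⟩ k hk j hj
        have hkb : k ∈ ball Δ G x 1 := (Subgroup.mem_inf.mp hk).2
        have hjb : j ∈ ball Δ G x 1 := (Subgroup.mem_inf.mp hj).2
        have hkH : k ∈ vstab G x ⊓ vstab G w' := hball_le w' hw' hkb
        refine Subgroup.mem_inf.mpr ⟨Op_conj_mem hkH (Subgroup.mem_inf.mp hj).1, ?_⟩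
        exact mul_mem (mul_mem hkb hjb) (inv_mem hkb)
    have hTnorm : normalIn
        (⨆ w ∈ Δ.neighborSet x, Op p (vstab G x ⊓ vstab G w) ⊓ ball Δ G x 1)
        (vstab G x ⊓ vstab G y) := by
      constructor
      · exact iSup₂_le fun w hw => inf_le_right.trans (hball_le y hxy)
      · intro h hh t ht
        have hhG : h ∈ G := vstab_le_G (Subgroup.mem_inf.mp hh).1
        have hhx : h x = x := (mem_vstab.mp (Subgroup.mem_inf.mp hh).1).2
        have hmap : (⨆ w ∈ Δ.neighborSet x,
            Op p (vstab G x ⊓ vstab G w) ⊓ ball Δ G x 1).map (cj h)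
            ≤ ⨆ w ∈ Δ.neighborSet x, Op p (vstab G x ⊓ vstab G w) ⊓ ball Δ G x 1 := by
          rw [map_biSup]
          refine iSup₂_le fun w hw => ?_
          have hAw : (Op p (vstab G x ⊓ vstab G w) ⊓ ball Δ G x 1).map (cj h)
              = Op p (vstab G x ⊓ vstab G (h w)) ⊓ ball Δ G x 1 := by
            rw [Subgroup.map_inf _ _ _ (cj_injective h), Op_map,
              Subgroup.map_inf _ _ _ (cj_injective h), map_cj_vstab hG hhG,
              map_cj_vstab hG hhG, map_cj_ball hconn hG hhG, hhx]
          rw [hAw]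
          have hadj : Δ.Adj x (h w) := by
            have h1 := (hG h hhG x w).mpr hw
            rwa [hhx] at h1
          exact le_iSup₂_of_le (h w) hadj le_rfl
        exact hmap ⟨t, ht, rfl⟩
    have hTOp : (⨆ w ∈ Δ.neighborSet x, Op p (vstab G x ⊓ vstab G w) ⊓ ball Δ G x 1)
        ≤ Op p (vstab G x ⊓ vstab G y) := le_sSup ⟨hTnorm, hTPgrp⟩
    have hOpEy : Op p (vstab G x ⊓ vstab G y) ≤ Ep Δ G p y := by
      have hcomm : vstab G x ⊓ vstab G y = vstab G y ⊓ vstab G x := inf_comm _ _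
      rw [hcomm]
      exact le_iSup₂_of_le x hxy.symm le_rfl
    intro w hw
    exact (le_iSup₂_of_le w hw le_rfl :
        Op p (vstab G x ⊓ vstab G w) ⊓ ball Δ G x 1 ≤ _).trans
      (hTOp.trans (hOpEy.trans hEy))
  -- each O_p(G_{x,w}) normalizes L := ball x 1 ⊓ ball y 1
  have hkey : ∀ w ∈ Δ.neighborSet x, ∀ q ∈ Op p (vstab G x ⊓ vstab G w),
      ∀ l ∈ ball Δ G x 1 ⊓ ball Δ G y 1,
      q * l * q⁻¹ ∈ ball Δ G x 1 ⊓ ball Δ G y 1 := by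
    intro w hw q hq l hl
    have hlx : l ∈ ball Δ G x 1 := (Subgroup.mem_inf.mp hl).1
    have hly : l ∈ ball Δ G y 1 := (Subgroup.mem_inf.mp hl).2
    have hqG : q ∈ G := hQ_le_G w hq
    have hqx : q x = x := (mem_vstab.mp (hQx w hq)).2
    have hqlx : q * l * q⁻¹ ∈ ball Δ G x 1 := by
      have h1 := memball_conj hconn hG hqG hlx
      rwa [hqx] at h1
    refine Subgroup.mem_inf.mpr ⟨hqlx, ?_⟩
    have hcA : q * (l * q⁻¹ * l⁻¹) ∈ Op p (vstab G x ⊓ vstab G w) ⊓ ball Δ G x 1 := by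
      refine Subgroup.mem_inf.mpr ⟨?_, ?_⟩
      · exact mul_mem hq (Op_conj_mem (hball_le w hw hlx) (inv_mem hq))
      · have he : q * (l * q⁻¹ * l⁻¹) = (q * l * q⁻¹) * l⁻¹ := by group
        rw [he]
        exact mul_mem hqlx (inv_mem hlx)
    have hcy : q * (l * q⁻¹ * l⁻¹) ∈ ball Δ G y 1 := hA_le w hw hcA
    have he2 : q * l * q⁻¹ = (q * (l * q⁻¹ * l⁻¹)) * l := by group
    rw [he2]
    exact mul_mem hcy hly
  have hEpnorm : Ep Δ G p x ≤ Subgroup.normalizer ((ball Δ G x 1 ⊓ ball Δ G y 1 : Subgroup (Perm V)) : Set (Perm V)) := by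
    refine iSup₂_le fun w hw q hq => ?_
    rw [Subgroup.mem_normalizer_iff]
    intro l
    constructor
    · intro hl
      exact hkey w hw q hq l hl
    · intro hl
      have h2 := hkey w hw q⁻¹ (inv_mem hq) _ hl
      have h3 : q⁻¹ * (q * l * q⁻¹) * q⁻¹⁻¹ = l := by group
      rwa [h3] at h2
  have hLz : ∀ z ∈ Δ.neighborSet x, ball Δ G x 1 ⊓ ball Δ G y 1 ≤ ball Δ G z 1 := by
    intro z hz l hl
    obtain ⟨e, heEp, hey⟩ := htrans y hxy z hz
    have heG : e ∈ G := vstab_le_G (Ep_le_vstab heEp)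
    have hen := hEpnorm heEp
    have h1 : e⁻¹ * l * e ∈ ball Δ G x 1 ⊓ ball Δ G y 1 := by
      refine (Subgroup.mem_normalizer_iff.mp hen (e⁻¹ * l * e)).mpr ?_
      have h3 : e * (e⁻¹ * l * e) * e⁻¹ = l := by group
      rw [h3]
      exact hl
    have h4 : e * (e⁻¹ * l * e) * e⁻¹ ∈ ball Δ G (e y) 1 :=
      memball_conj hconn hG heG (Subgroup.mem_inf.mp h1).2
    have h5 : e * (e⁻¹ * l * e) * e⁻¹ = l := by group
    rw [h5, hey] at h4
    exact h4
  apply le_antisymm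
  · intro g hg
    rw [mem_ball]
    have hgx : g ∈ ball Δ G x 1 := (Subgroup.mem_inf.mp hg).1
    refine ⟨ball_le_G hgx, fun z hz => ?_⟩
    rcases dist_decomp hconn x z 1 hz with rfl | ⟨w, hw, hwz⟩
    · exact (mem_ball.mp hgx).2 z (by simp [SimpleGraph.dist_self])
    · exact (mem_ball.mp (hLz w hw hg)).2 z hwz
  · exact le_inf (ball_mono (by norm_num)) (ball_adj hconn hxy 1)

end StmtAux

theorem stmt10 {V : Type*} [Fintype V] (Δ : SimpleGraph V) (G : Subgroup (Equiv.Perm V))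
    (hconn : Δ.Connected) (hG : isAut Δ G) (hstar : StarHyp Δ G)
    (p : ℕ) (hp : p.Prime) {x y : V} (hxy : Δ.Adj x y)
    (hEx : ¬ Ep Δ G p x ≤ ball Δ G x 1) (hEy : Ep Δ G p y ≤ ball Δ G y 1) :
    ball Δ G x 1 ⊓ ball Δ G y 1 = ball Δ G x 2 ∧ ball Δ G y 2 = ball Δ G y 3 := by
  have goal1all : ∀ z ∈ Δ.neighborSet y,
      ball Δ G z 1 ⊓ ball Δ G y 1 = ball Δ G z 2 := by
    intro z hz
    obtain ⟨g0, hg0, hg0x⟩ := (hstar y).1 x hxy.symm z hz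
    have hg0G : g0 ∈ G := StmtAux.vstab_le_G hg0
    have hExz : ¬ Ep Δ G p z ≤ ball Δ G z 1 := by
      intro hle
      apply hEx
      intro a ha
      have hb : g0 * a * g0⁻¹ ∈ Ep Δ G p z := by
        have h1 := StmtAux.memEp_conj hconn hG hg0G ha
        rwa [hg0x] at h1
      have hb2 : g0 * a * g0⁻¹ ∈ ball Δ G (g0 x) 1 := by
        rw [hg0x]
        exact hle hb
      have h3 := StmtAux.memball_conj hconn hG (inv_mem hg0G) hb2
      have h4 : g0⁻¹ * (g0 * a * g0⁻¹) * g0⁻¹⁻¹ = a := by group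
      have h5 : g0⁻¹ (g0 x) = x := by simp
      rwa [h4, h5] at h3
    have hzy : Δ.Adj z y := (SimpleGraph.mem_neighborSet _ _ _).mp hz |>.symm
    exact StmtAux.goal1 hconn hG hstar hp hzy hExz hEy
  constructor
  · exact StmtAux.goal1 hconn hG hstar hp hxy hEx hEy
  · apply le_antisymm
    · intro g hg
      rw [StmtAux.mem_ball]
      refine ⟨StmtAux.ball_le_G hg, fun w hw => ?_⟩
      rcases StmtAux.dist_decomp hconn y w 2 hw with rfl | ⟨z, hyz, hzw⟩
      · exact (StmtAux.mem_ball.mp hg).2 w (by simp [SimpleGraph.dist_self])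
      · have hgz2 : g ∈ ball Δ G z 2 := by
          rw [← goal1all z hyz]
          exact Subgroup.mem_inf.mpr
            ⟨StmtAux.ball_adj hconn hyz 1 hg, StmtAux.ball_mono (by norm_num) hg⟩
        exact (StmtAux.mem_ball.mp hgz2).2 w hzw
    · exact StmtAux.ball_mono (by norm_num)
end
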